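/- Let a₁ = (1,0), a₂ = (−1/2, √3/2), a₃ = (−1/2, −√3/2) in ℝ², and set ω² = 2/√3. Then for each i ∈ {1,2,3}: ω²·aᵢ = Σ_{j≠i} (aᵢ − aⱼ)·(‖aᵢ − aⱼ‖^(−3) + 3‖aᵢ − aⱼ‖^(−5)). In other words, the equal-mass equilateral triangle inscribed in the unit circle is a central configuration of the Schwarzschild potential with multiplier ω² = 2/√3. -/

import Mathlib

open Finset

/-- The vertices of the equilateral triangle inscribed in the unit circle. -/
noncomputable def a3 : Fin 3 → EuclideanSpace ℝ (Fin 2) :=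
  ![!₂[1, 0], !₂[-(1/2), Real.sqrt 3 / 2], !₂[-(1/2), -(Real.sqrt 3 / 2)]]

lemma norm_pair (u : EuclideanSpace ℝ (Fin 2)) : ‖u‖ = Real.sqrt (u 0^2 + u 1^2) := by
  rw [EuclideanSpace.norm_eq]
  congr 1
  simp [Fin.sum_univ_two, sq_abs]

lemma hnorm3 : ∀ i j : Fin 3, i ≠ j → ‖a3 i - a3 j‖ = Real.sqrt 3 := by
  have hs : Real.sqrt 3 ^ 2 = 3 := Real.sq_sqrt (by norm_num)
  intro i j hij
  rw [norm_pair]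
  fin_cases i <;> fin_cases j <;> simp only [a3] at hij ⊢ <;>
    first
      | exact absurd rfl hij
      | (simp [Matrix.cons_val_zero, Matrix.cons_val_one]; try (congr 1 <;> nlinarith [hs]))

lemma coef_eq : (Real.sqrt 3) ^ (-3 : ℤ) + 3 * (Real.sqrt 3) ^ (-5 : ℤ) = 2/(3*Real.sqrt 3) := by
  have hs : Real.sqrt 3 ^ 2 = 3 := Real.sq_sqrt (by norm_num)
  have hne : Real.sqrt 3 ≠ 0 := by positivity
  have h3 : Real.sqrt 3 ^ (3:ℕ) = 3 * Real.sqrt 3 := by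
    calc Real.sqrt 3 ^ (3:ℕ) = Real.sqrt 3 ^ 2 * Real.sqrt 3 := by ring
    _ = 3 * Real.sqrt 3 := by rw [hs]
  have h5 : Real.sqrt 3 ^ (5:ℕ) = 9 * Real.sqrt 3 := by
    calc Real.sqrt 3 ^ (5:ℕ) = (Real.sqrt 3 ^ 2)^2 * Real.sqrt 3 := by ring
    _ = 9 * Real.sqrt 3 := by rw [hs]; ring
  rw [show (-3:ℤ) = -(3:ℕ) by norm_num, show (-5:ℤ) = -(5:ℕ) by norm_num,
    zpow_neg, zpow_natCast, zpow_neg, zpow_natCast, h3, h5]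
  field_simp
  ring

lemma key (i j k : Fin 3) (hij : i ≠ j) (hik : i ≠ k) (hjk : j ≠ k)
    (hsum : (Finset.univ \ {i}) = {j, k})
    (hv : (a3 i - a3 j) + (a3 i - a3 k) = (3:ℝ) • a3 i) :
    (2 / Real.sqrt 3) • a3 i =
      ∑ j' ∈ Finset.univ \ {i},
        (‖a3 i - a3 j'‖ ^ (-3 : ℤ) + 3 * ‖a3 i - a3 j'‖ ^ (-5 : ℤ)) • (a3 i - a3 j') := by
  have hne : Real.sqrt 3 ≠ 0 := by positivity
  have hs : Real.sqrt 3 ^ 2 = 3 := Real.sq_sqrt (by norm_num)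
  rw [hsum, Finset.sum_pair hjk, hnorm3 i j hij, hnorm3 i k hik, coef_eq,
    ← smul_add, hv, smul_smul]
  congr 1
  field_simp

/-- The equal-mass equilateral triangle inscribed in the unit circle is a central
configuration of the Schwarzschild potential with multiplier `ω² = 2/√3`. -/
theorem triangle_central_config_schwarzschild :
    ∀ i : Fin 3,
      (2 / Real.sqrt 3) • a3 i =
        ∑ j ∈ Finset.univ \ {i},
          (‖a3 i - a3 j‖ ^ (-3 : ℤ) + 3 * ‖a3 i - a3 j‖ ^ (-5 : ℤ)) • (a3 i - a3 j) := by
  intro i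
  fin_cases i
  · exact key 0 1 2 (by decide) (by decide) (by decide) (by decide)
      (by ext m; fin_cases m <;> simp [a3] <;> ring)
  · exact key 1 0 2 (by decide) (by decide) (by decide) (by decide)
      (by ext m; fin_cases m <;> simp [a3] <;> ring)
  · exact key 2 0 1 (by decide) (by decide) (by decide) (by decide)
      (by ext m; fin_cases m <;> simp [a3] <;> ring)
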